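/- Assume J = 2 and b_1 ≥ b_2. Let θ : K → ℝ be nonnegative, satisfy the reduced balance equations, and have total mass Σ_{k∈K} θ(k) = 1; write θ(k_1,k_2) for its values. Then for every integer ℓ_1 with 0 ≤ ℓ_1 ≤ b_1 − b_2: Σ_{k_2=0}^{b_2} θ(ℓ_1, k_2) = (Σ_{k_2=0}^{b_2} θ(0, k_2)) · (ν/λ_1)^{ℓ_1}. -/

import Mathlib

open Finset

/-- `k + e_i`: add one unit in coordinate `i`. -/
def addE {J : ℕ} (k : Fin J → ℕ) (i : Fin J) : Fin J → ℕ :=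
  Function.update k i (k i + 1)

/-- `k - e_i`: remove one unit in coordinate `i`. -/
def subE {J : ℕ} (k : Fin J → ℕ) (i : Fin J) : Fin J → ℕ :=
  Function.update k i (k i - 1)

/-- The set `M(k)` of locations attaining the maximal difference `b_i - k_i`. -/
def Mset {J : ℕ} (b k : Fin J → ℕ) : Finset (Fin J) :=
  Finset.univ.filter (fun i => b i - k i = Finset.univ.sup (fun j => b j - k j))

/-- Routing probability `p_i(k)` (strict load balancing policy). -/
noncomputable def routeP {J : ℕ} (b k : Fin J → ℕ) (i : Fin J) : ℝ :=
  if i ∈ Mset b k then 1 / ((Mset b k).card : ℝ) else 0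

/-- The inventory state space `K = {k : 0 ≤ k_j ≤ b_j}` as a `Finset`. -/
def Kfin {J : ℕ} (b : Fin J → ℕ) : Finset (Fin J → ℕ) :=
  Fintype.piFinset fun j => Finset.range (b j + 1)

/-- The reduced balance equation at a single state `k`. -/
def RBEat {J : ℕ} (lam : Fin J → ℝ) (b : Fin J → ℕ) (ν : ℝ)
    (θ : (Fin J → ℕ) → ℝ) (k : Fin J → ℕ) : Prop :=
  θ k * ((∑ i ∈ Finset.univ.filter (fun i => 0 < k i), lam i)
      + ∑ i ∈ Finset.univ.filter (fun i => k i < b i), ν * routeP b k i)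
    = (∑ i ∈ Finset.univ.filter (fun i => k i < b i), θ (addE k i) * lam i)
      + ∑ i ∈ Finset.univ.filter (fun i => 0 < k i),
          θ (subE k i) * ν * routeP b (subE k i) i

/-- `θ` satisfies the reduced balance equations (at every `k ∈ K`). -/
def ReducedBalance {J : ℕ} (lam : Fin J → ℝ) (b : Fin J → ℕ) (ν : ℝ)
    (θ : (Fin J → ℕ) → ℝ) : Prop :=
  ∀ k : Fin J → ℕ, (∀ j, k j ≤ b j) → RBEat lam b ν θ k

/-- The global balance equation at a single state `(n, k)`. -/
def GBEat {J : ℕ} (lam : Fin J → ℝ) (b : Fin J → ℕ) (μ : Fin J → ℕ → ℝ) (ν : ℝ)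
    (x : (Fin J → ℕ) → (Fin J → ℕ) → ℝ) (n k : Fin J → ℕ) : Prop :=
  x n k * ((∑ i ∈ Finset.univ.filter (fun i => 0 < k i), lam i)
      + (∑ i ∈ Finset.univ.filter (fun i => 0 < n i ∧ 0 < k i), μ i (n i))
      + ∑ i ∈ Finset.univ.filter (fun i => k i < b i), ν * routeP b k i)
    = (∑ i ∈ Finset.univ.filter (fun i => 0 < n i ∧ 0 < k i), x (subE n i) k * lam i)
      + (∑ i ∈ Finset.univ.filter (fun i => k i < b i),
          x (addE n i) (addE k i) * μ i (n i + 1))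
      + ∑ i ∈ Finset.univ.filter (fun i => 0 < k i),
          x n (subE k i) * ν * routeP b (subE k i) i

/-- `x` satisfies the global balance equations (at every `(n,k) ∈ ℕ^J × K`). -/
def GlobalBalance {J : ℕ} (lam : Fin J → ℝ) (b : Fin J → ℕ) (μ : Fin J → ℕ → ℝ)
    (ν : ℝ) (x : (Fin J → ℕ) → (Fin J → ℕ) → ℝ) : Prop :=
  ∀ n k : Fin J → ℕ, (∀ j, k j ≤ b j) → GBEat lam b μ ν x n k

/-- `ξ̃_j(n) = ∏_{ℓ=1}^n λ_j / μ_j(ℓ)`. -/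
noncomputable def xiT {J : ℕ} (lam : Fin J → ℝ) (μ : Fin J → ℕ → ℝ)
    (j : Fin J) (n : ℕ) : ℝ :=
  ∏ l ∈ Finset.Icc 1 n, lam j / μ j l

/-- `ξ̃(n) = ∏_j ξ̃_j(n_j)`. -/
noncomputable def xiTvec {J : ℕ} (lam : Fin J → ℝ) (μ : Fin J → ℕ → ℝ)
    (n : Fin J → ℕ) : ℝ :=
  ∏ j, xiT lam μ j (n j)

/-- The transition rates `q_red` of the reduced (inventory-replenishment) process. -/
noncomputable def qred {J : ℕ} (lam : Fin J → ℝ) (b : Fin J → ℕ) (ν : ℝ)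
    (k k' : Fin J → ℕ) : ℝ :=
  (∑ i : Fin J, (if 0 < k i ∧ k' = subE k i then lam i else 0))
    + ∑ i : Fin J, (if k i < b i ∧ k' = addE k i then ν * routeP b k i else 0)

/-- The candidate stationary measure for base stock levels all equal to one. -/
noncomputable def thetaOne {J : ℕ} (lam : Fin J → ℝ) (ν : ℝ)
    (k : Fin J → ℕ) : ℝ :=
  (∏ l ∈ Finset.range (∑ j, k j), 1 / ((J : ℝ) - (l : ℝ)))
    * (∏ j, (1 / lam j) ^ (k j)) * (1 / ν) ^ (J - ∑ j, k j)

lemma addE0 (a c : ℕ) : addE ![a,c] 0 = ![a+1,c] := by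
  funext i; fin_cases i <;> simp [addE, Function.update]
lemma addE1 (a c : ℕ) : addE ![a,c] 1 = ![a,c+1] := by
  funext i; fin_cases i <;> simp [addE, Function.update]
lemma subE0 (a c : ℕ) : subE ![a,c] 0 = ![a-1,c] := by
  funext i; fin_cases i <;> simp [subE, Function.update]
lemma subE1 (a c : ℕ) : subE ![a,c] 1 = ![a,c-1] := by
  funext i; fin_cases i <;> simp [subE, Function.update]

lemma sup_two (f : Fin 2 → ℕ) : Finset.univ.sup f = max (f 0) (f 1) := by
  rw [show (Finset.univ : Finset (Fin 2)) = {0, 1} by decide]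
  simp [Finset.sup_insert, Finset.sup_singleton]

lemma Mset_left {b k : Fin 2 → ℕ} (h : b 1 - k 1 < b 0 - k 0) :
    Mset b k = {0} := by
  ext i
  fin_cases i <;>
    simp [Mset, sup_two, Nat.max_eq_left h.le, Nat.ne_of_lt h]

lemma route0_left {b k : Fin 2 → ℕ} (h : b 1 - k 1 < b 0 - k 0) :
    routeP b k 0 = 1 := by
  simp [routeP, Mset_left h]

lemma RBE_explicit {lam : Fin 2 → ℝ} {b : Fin 2 → ℕ} {ν : ℝ}
    {θ : (Fin 2 → ℕ) → ℝ} {a c : ℕ}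
    (h : RBEat lam b ν θ ![a, c]) :
    θ ![a,c] * ((if 0 < a then lam 0 else 0) + (if 0 < c then lam 1 else 0)
      + ((if a < b 0 then ν * routeP b ![a,c] 0 else 0)
        + (if c < b 1 then ν * routeP b ![a,c] 1 else 0)))
    = ((if a < b 0 then θ ![a+1,c] * lam 0 else 0)
      + (if c < b 1 then θ ![a,c+1] * lam 1 else 0))
      + ((if 0 < a then θ ![a-1,c] * ν * routeP b ![a-1,c] 0 else 0)
      + (if 0 < c then θ ![a,c-1] * ν * routeP b ![a,c-1] 1 else 0)) := by
  unfold RBEat at h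
  simp only [Finset.sum_filter, Fin.sum_univ_two, Matrix.cons_val_zero,
    Matrix.cons_val_one, Matrix.head_cons, addE0, addE1, subE0, subE1] at h
  exact h

lemma shift1 (n : ℕ) (g : ℕ → ℝ) :
    ∑ c ∈ Finset.range (n+1), (if 0 < c then g c else 0)
      = ∑ c ∈ Finset.range (n+1), (if c < n then g (c+1) else 0) := by
  rw [Finset.sum_range_succ' (fun c => if 0 < c then g c else 0) n,
      Finset.sum_range_succ (fun c => if c < n then g (c+1) else 0) n]
  simp only [Nat.succ_pos, if_true, lt_irrefl, if_false, Nat.lt_irrefl,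
    add_zero, Nat.not_lt_zero]
  exact Finset.sum_congr rfl (fun c hc => by
    rw [if_pos (Finset.mem_range.mp hc)])

lemma sum_ite_const {P : Prop} [Decidable P] (s : Finset ℕ) (f : ℕ → ℝ) :
    ∑ c ∈ s, (if P then f c else 0) = if P then ∑ c ∈ s, f c else 0 := by
  split_ifs <;> simp

lemma column_balance {lam : Fin 2 → ℝ} {b : Fin 2 → ℕ} {ν : ℝ}
    {θ : (Fin 2 → ℕ) → ℝ} {a : ℕ} (ha : a ≤ b 0)
    (hbal : ∀ k : Fin 2 → ℕ, (∀ j, k j ≤ b j) → RBEat lam b ν θ k) :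
    (if 0 < a then lam 0 * ∑ c ∈ Finset.range (b 1 + 1), θ ![a,c] else 0)
      + (if a < b 0 then
          ∑ c ∈ Finset.range (b 1 + 1), θ ![a,c] * (ν * routeP b ![a,c] 0) else 0)
    = (if a < b 0 then lam 0 * ∑ c ∈ Finset.range (b 1 + 1), θ ![a+1,c] else 0)
      + (if 0 < a then
          ∑ c ∈ Finset.range (b 1 + 1), θ ![a-1,c] * (ν * routeP b ![a-1,c] 0) else 0) := by
  have hs : ∀ c ∈ Finset.range (b 1 + 1),
      θ ![a,c] * ((if 0 < a then lam 0 else 0) + (if 0 < c then lam 1 else 0)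
        + ((if a < b 0 then ν * routeP b ![a,c] 0 else 0)
          + (if c < b 1 then ν * routeP b ![a,c] 1 else 0)))
      = ((if a < b 0 then θ ![a+1,c] * lam 0 else 0)
        + (if c < b 1 then θ ![a,c+1] * lam 1 else 0))
        + ((if 0 < a then θ ![a-1,c] * ν * routeP b ![a-1,c] 0 else 0)
        + (if 0 < c then θ ![a,c-1] * ν * routeP b ![a,c-1] 1 else 0)) := by
    intro c hc
    refine RBE_explicit (hbal ![a,c] ?_)
    intro j; fin_cases j
    · simpa using ha
    · simpa using Nat.lt_succ_iff.mp (Finset.mem_range.mp hc)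
  have hsum := Finset.sum_congr rfl hs
  simp only [mul_add, mul_ite, mul_zero, Finset.sum_add_distrib, sum_ite_const] at hsum
  have e1 : ∑ c ∈ Finset.range (b 1 + 1), (if 0 < c then θ ![a,c] * lam 1 else 0)
      = ∑ c ∈ Finset.range (b 1 + 1), (if c < b 1 then θ ![a,c+1] * lam 1 else 0) :=
    shift1 (b 1) _
  have e2 : ∑ c ∈ Finset.range (b 1 + 1),
        (if 0 < c then θ ![a,c-1] * ν * routeP b ![a,c-1] 1 else 0)
      = ∑ c ∈ Finset.range (b 1 + 1),
        (if c < b 1 then θ ![a,c] * ν * routeP b ![a,c] 1 else 0) := by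
    rw [shift1 (b 1) (fun c => θ ![a,c-1] * ν * routeP b ![a,c-1] 1)]
    simp
  have e3 : ∑ c ∈ Finset.range (b 1 + 1), (if c < b 1 then θ ![a,c] * (ν * routeP b ![a,c] 1) else 0)
      = ∑ c ∈ Finset.range (b 1 + 1), (if c < b 1 then θ ![a,c] * ν * routeP b ![a,c] 1 else 0) := by
    refine Finset.sum_congr rfl fun c hc => ?_
    ring_nf
  have e4 : ∀ m : ℕ, ∑ c ∈ Finset.range (b 1 + 1), lam 0 * θ ![m,c]
      = ∑ c ∈ Finset.range (b 1 + 1), θ ![m,c] * lam 0 :=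
    fun m => Finset.sum_congr rfl fun c _ => by ring
  have e6 : ∀ m : ℕ, ∑ c ∈ Finset.range (b 1 + 1), θ ![m,c] * ν * routeP b ![m,c] 0
      = ∑ c ∈ Finset.range (b 1 + 1), θ ![m,c] * (ν * routeP b ![m,c] 0) :=
    fun m => Finset.sum_congr rfl fun c _ => by ring
  split_ifs at hsum ⊢ with h1 h2 <;>
    simp only [Finset.sum_const_zero, zero_add, add_zero, Finset.mul_sum] at hsum ⊢ <;>
    linarith [e1, e2, e3, e4 a, e4 (a+1), e6 (a-1), hsum]


/-- two heterogeneous locations, geometric form of the marginal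
distribution of the first inventory below `b₁ - b₂`. -/
theorem two_locations_marginal_Y1_geometric
    (lam : Fin 2 → ℝ) (hlam : ∀ j, 0 < lam j)
    (b : Fin 2 → ℕ) (hb : ∀ j, 1 ≤ b j) (hb12 : b 1 ≤ b 0)
    (ν : ℝ) (hν : 0 < ν)
    (θ : (Fin 2 → ℕ) → ℝ)
    (hθnn : ∀ k : Fin 2 → ℕ, (∀ j, k j ≤ b j) → 0 ≤ θ k)
    (hbal : ReducedBalance lam b ν θ)
    (hmass : ∑ k ∈ Kfin b, θ k = 1) :
    ∀ ℓ₁ : ℕ, ℓ₁ ≤ b 0 - b 1 →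
      ∑ k₂ ∈ Finset.range (b 1 + 1), θ ![ℓ₁, k₂]
        = (∑ k₂ ∈ Finset.range (b 1 + 1), θ ![0, k₂]) * (ν / lam 0) ^ ℓ₁ := by
  set S : ℕ → ℝ := fun m => ∑ c ∈ Finset.range (b 1 + 1), θ ![m, c] with hS
  set D : ℕ → ℝ := fun m => ∑ c ∈ Finset.range (b 1 + 1),
      θ ![m, c] * (ν * routeP b ![m, c] 0) with hD
  -- cut identity : D a = lam 0 * S (a+1) for a < b 0
  have hcut : ∀ a : ℕ, a < b 0 → D a = lam 0 * S (a + 1) := by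
    intro a
    induction a with
    | zero =>
      intro h0
      have hc := column_balance (Nat.zero_le _) hbal
      rw [if_neg (lt_irrefl 0), if_pos h0, if_pos h0, if_neg (lt_irrefl 0)] at hc
      simpa using hc
    | succ a ih =>
      intro h1
      have ha : a < b 0 := Nat.lt_of_succ_lt h1
      have hc := column_balance (le_of_lt h1) hbal
      rw [if_pos (Nat.succ_pos a), if_pos h1, if_pos h1, if_pos (Nat.succ_pos a)] at hc
      have hia := ih ha
      simp only [Nat.add_sub_cancel] at hc
      linarith [hc, hia]
  -- below the threshold, all replenishment goes to location 0
  have hDν : ∀ a : ℕ, a < b 0 - b 1 → D a = ν * S a := by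
    intro a haa
    have hab : a + b 1 < b 0 := Nat.add_lt_of_lt_sub haa
    have hroute : ∀ c : ℕ, c ∈ Finset.range (b 1 + 1) → routeP b ![a, c] 0 = 1 := by
      intro c _
      apply route0_left
      have h1 : b 1 - (![a, c] : Fin 2 → ℕ) 1 ≤ b 1 := Nat.sub_le _ _
      have h2 : b 1 < b 0 - (![a, c] : Fin 2 → ℕ) 0 := by
        simp only [Matrix.cons_val_zero]
        omega
      exact lt_of_le_of_lt h1 h2
    rw [hD, hS]
    simp only []
    rw [Finset.mul_sum]
    refine Finset.sum_congr rfl fun c hc => ?_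
    rw [hroute c hc]; ring
  -- geometric recursion
  have hlam0 : lam 0 ≠ 0 := ne_of_gt (hlam 0)
  have hstep : ∀ a : ℕ, a < b 0 - b 1 → S (a + 1) = S a * (ν / lam 0) := by
    intro a haa
    have hab : a < b 0 := lt_of_lt_of_le haa (Nat.sub_le _ _)
    have h1 := hcut a hab
    have h2 := hDν a haa
    field_simp
    linarith [h1, h2]
  intro ℓ₁
  induction ℓ₁ with
  | zero => intro _; simp
  | succ l ih =>
    intro hl
    have hl' : l ≤ b 0 - b 1 := Nat.le_of_succ_le hl
    have hll : l < b 0 - b 1 := hl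
    have h := hstep l hll
    simp only [hS] at h
    rw [h, ih hl', pow_succ]
    ring
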